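/- Let χ: ℙ₁ × ℙ₂ → ℙ' be a linear map satisfying conditions (i) and (ii), with A ∈ 𝒫₁ as in condition (ii) and basis 𝓑 as in condition (i), let γ be a regular embedding, and let φ: ℙ̄ → ℙ' be a linear map extending (γ⁻¹χ) restricted to (𝒫₁ × 𝓑)γ. Then ({A} × 𝒫₂)γφ = ({A} × 𝒫₂)χ; moreover, for every X ∈ 𝒫₂ there is exactly one point Y ∈ 𝒫₂ such that (A, Y)χ = (A, X)γφ, and the map α': 𝒫₂ → 𝒫₂ defined by Xα' := Y is a collineation of ℙ₂. -/

import Mathlib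

open Set

namespace Segre

variable {P Q : Type*}

/-- Two points are collinear w.r.t. a line set `L` if some line contains both. -/
def Collin (L : Set (Set P)) (x y : P) : Prop := ∃ g ∈ L, x ∈ g ∧ y ∈ g

/-- The union of all lines of `L` through both `x` and `y`; for distinct collinear
points of a semilinear space this is the unique line `xy`. -/
def lineThru (L : Set (Set P)) (x y : P) : Set P := ⋃ g ∈ {g ∈ L | x ∈ g ∧ y ∈ g}, g

/-- The join `M₁ ∨ M₂` of two point sets in a (semi)linear space with line set `L`. -/
def sJoin (L : Set (Set P)) (M₁ M₂ : Set P) : Set P :=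
  M₁ ∪ M₂ ∪
    ⋃ (x ∈ M₁) (y ∈ M₂) (_ : x ≠ y ∧ Collin L x y), lineThru L x y

/-- The (possibly empty) image point set `Xχ` of a single point under a partial map. -/
def ptImg (χ : P → Option Q) (X : P) : Set Q := {y | χ X = some y}

/-- The image `Mχ` of a point set under a partial map. -/
def mapSet (χ : P → Option Q) (M : Set P) : Set Q := ⋃ X ∈ M, ptImg χ X

/-- Axioms (L1) and (L2) for a linear map from the semilinear space with point set `P`
and line set `L` into the projective space with point set `Q` and line set `L'`.
Points in the exceptional set are modelled by the value `none`. -/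
def IsLinMap (L : Set (Set P)) (L' : Set (Set Q)) (χ : P → Option Q) : Prop :=
  (∀ X Y : P, Collin L X Y →
      mapSet χ (sJoin L {X} {Y}) = sJoin L' (ptImg χ X) (ptImg χ Y)) ∧
  (∀ X Y : P, Collin L X Y → X ≠ Y → ptImg χ X = ptImg χ Y →
      ∃ Z ∈ lineThru L X Y, χ Z = none)

/-- A linear map is global if its domain is everything. -/
def IsGlobal (χ : P → Option Q) : Prop := ∀ X, χ X ≠ none

/-- The lines of the product of two semilinear spaces with line sets `L₁`, `L₂`. -/
def prodLines (L₁ : Set (Set P)) (L₂ : Set (Set Q)) : Set (Set (P × Q)) :=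
  {s | (∃ X₁ : P, ∃ g₂ ∈ L₂, s = {X₁} ×ˢ g₂) ∨ ∃ g₁ ∈ L₁, ∃ X₂ : Q, s = g₁ ×ˢ {X₂}}

/-- The lines of the product of two lines `ℓ₁`, `ℓ₂` (viewed as semilinear spaces). -/
def lineProdLines (ℓ₁ : Set P) (ℓ₂ : Set Q) : Set (Set (P × Q)) :=
  {s | (∃ X ∈ ℓ₁, s = {X} ×ˢ ℓ₂) ∨ ∃ Y ∈ ℓ₂, s = ℓ₁ ×ˢ {Y}}

/-- A collineation of a projective (or semilinear) space with line set `L`: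
a bijection such that it and its inverse map lines onto lines. -/
def IsCollineation (L : Set (Set P)) (α : P → P) : Prop :=
  Function.Bijective α ∧ ∀ g : Set P, g ∈ L ↔ α '' g ∈ L

section Projective

variable {K V : Type*} [Field K] [AddCommGroup V] [Module K V]

/-- The point set of the projective line through two (distinct) points of a
projective space `ℙ K V`. -/
def projLineThrough (x y : Projectivization K V) : Set (Projectivization K V) :=
  {z | z.submodule ≤ x.submodule ⊔ y.submodule}

/-- The lines of the projective space `ℙ K V`. -/
def projLines (K V : Type*) [Field K] [AddCommGroup V] [Module K V] :
    Set (Set (Projectivization K V)) :=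
  {g | ∃ x y : Projectivization K V, x ≠ y ∧ g = projLineThrough x y}

/-- The linear span of (representatives of) a set of projective points; its projective
space is the projective closure of the set, whose projective dimension is the vector
rank of this span minus one. -/
def spanOf (M : Set (Projectivization K V)) : Submodule K V := ⨆ x ∈ M, x.submodule

/-- `E` is the point set of a plane (projective dimension 2). -/
def IsPlane (E : Set (Projectivization K V)) : Prop :=
  ∃ W : Submodule K V, Module.finrank K ↥W = 3 ∧ E = {x | x.submodule ≤ W}

/-- The family of points `A` is a projective basis of the subspace of `ℙ K V`
corresponding to the submodule `W`: the representatives are linearly independent and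
span `W`. -/
def IsProjBasisOf {ι : Type*} (A : ι → Projectivization K V) (W : Submodule K V) : Prop :=
  iSupIndep (fun i => (A i).submodule) ∧ (⨆ i, (A i).submodule) = W

end Projective

section PG

variable (F : Type*) [Field F]

/-- The point set of `PG(k, F)`. -/
abbrev PGPt (k : ℕ) := Projectivization F (Fin (k + 1) → F)

/-- The line set of `PG(k, F)`. -/
abbrev PGLines (k : ℕ) := projLines F (Fin (k + 1) → F)

variable (n m : ℕ)

/-- A regular embedding `γ : ℙ₁ × ℙ₂ → ℙ̄`, where `ℙ₁ = PG(n,F)`, `ℙ₂ = PG(m,F)` and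
`ℙ̄ = PG(nm+n+m, F)`: a global injective linear map of the product such that the
projective closure of the image has (projective) dimension `nm+n+m`. -/
def IsRegularEmbedding (γ : PGPt F n × PGPt F m → PGPt F (n * m + n + m)) : Prop :=
  IsLinMap (prodLines (PGLines F n) (PGLines F m)) (PGLines F (n * m + n + m))
      (fun p => some (γ p)) ∧
  Function.Injective γ ∧
  Module.finrank F ↥(spanOf (Set.range γ)) = n * m + n + m + 1

variable {K W : Type*} [Field K] [AddCommGroup W] [Module K W]

/-- Condition (i) on `χ`, w.r.t. the basis `B` of `ℙ₂` and the plane `E ⊆ 𝒫₁`: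
for every `i = 1, …, m` the restriction of `χ` to `E × {B 0, B i}` is global and
of rank greater than `2` (i.e. the vector rank of the span of its image exceeds `3`). -/
def CondI (χ : PGPt F n × PGPt F m → Option (Projectivization K W))
    (B : Fin (m + 1) → PGPt F m) (E : Set (PGPt F n)) : Prop :=
  IsProjBasisOf B (⊤ : Submodule F (Fin (m + 1) → F)) ∧ IsPlane E ∧
  ∀ i : Fin (m + 1), i ≠ 0 →
    (∀ p ∈ E ×ˢ ({B 0, B i} : Set (PGPt F m)), χ p ≠ none) ∧
    3 < Module.rank K ↥(spanOf (mapSet χ (E ×ˢ ({B 0, B i} : Set (PGPt F m)))))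

/-- Condition (ii) on `χ`, w.r.t. the point `A ∈ 𝒫₁`: the image `({A} × 𝒫₂)χ` has
projective dimension `m` (i.e. the vector rank of the span of the image is `m + 1`). -/
def CondII (χ : PGPt F n × PGPt F m → Option (Projectivization K W))
    (A : PGPt F n) : Prop :=
  Module.rank K ↥(spanOf (mapSet χ (({A} : Set (PGPt F n)) ×ˢ (univ : Set (PGPt F m)))))
    = (m : Cardinal) + 1

/-- `ℓ₂` is a special line for the data `χ, γ, φ, α'`: it is a line of `ℙ₂` such that
(a) `({X} × ℓ₂)γφ = ({X} × ℓ₂)αχ` for every `X ∈ 𝒫₁`, and (b) the rank of `αχ`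
restricted to `𝒫₁ × ℓ₂` is greater than `1` (vector rank of the span `> 2`). -/
def SpecialLine (χ : PGPt F n × PGPt F m → Option (Projectivization K W))
    (γ : PGPt F n × PGPt F m → PGPt F (n * m + n + m))
    (φ : PGPt F (n * m + n + m) → Option (Projectivization K W))
    (α' : PGPt F m → PGPt F m) (ℓ₂ : Set (PGPt F m)) : Prop :=
  ℓ₂ ∈ PGLines F m ∧
  (∀ X : PGPt F n,
    mapSet (fun p => φ (γ p)) (({X} : Set (PGPt F n)) ×ˢ ℓ₂) =
      mapSet (fun p : PGPt F n × PGPt F m => χ (p.1, α' p.2))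
        (({X} : Set (PGPt F n)) ×ˢ ℓ₂)) ∧
  2 < Module.rank K ↥(spanOf (mapSet (fun p : PGPt F n × PGPt F m => χ (p.1, α' p.2))
        ((univ : Set (PGPt F n)) ×ˢ ℓ₂)))

end PG

end Segre

namespace Segre

open scoped LinearAlgebra.Projectivization

set_option maxHeartbeats 1000000

/-! ### Auxiliary lemmas -/

section ProjAux

variable {K V : Type*} [Field K] [AddCommGroup V] [Module K V]
open Projectivization

lemma mem_projLineThrough_left (x y : ℙ K V) : x ∈ projLineThrough x y := by simp only [projLineThrough, mem_setOf_eq]; exact le_sup_left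

lemma mem_projLineThrough_right (x y : ℙ K V) : y ∈ projLineThrough x y := by simp only [projLineThrough, mem_setOf_eq]; exact le_sup_right

lemma projLineThrough_mem {x y : ℙ K V} (h : x ≠ y) :
    projLineThrough x y ∈ projLines K V := ⟨x, y, h, rfl⟩

lemma collin_proj {x y : ℙ K V} (h : x ≠ y) : Collin (projLines K V) x y :=
  ⟨projLineThrough x y, projLineThrough_mem h, mem_projLineThrough_left _ _,
    mem_projLineThrough_right _ _⟩

lemma finrank_sup_point {x y : ℙ K V} (h : x ≠ y) :
    Module.finrank K ↥(x.submodule ⊔ y.submodule) = 2 := by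
  have hx := x.finrank_submodule
  have hy := y.finrank_submodule
  have hinf : x.submodule ⊓ y.submodule = ⊥ := by
    by_contra hne
    have h1 : Module.finrank K ↥(x.submodule ⊓ y.submodule) ≠ 0 := by
      simpa [Submodule.finrank_eq_zero] using hne
    have hle : 1 ≤ Module.finrank K ↥(x.submodule ⊓ y.submodule) := Nat.one_le_iff_ne_zero.2 h1
    have e1 : x.submodule ⊓ y.submodule = x.submodule :=
      Submodule.eq_of_le_of_finrank_le inf_le_left (by omega)
    have e2 : x.submodule ⊓ y.submodule = y.submodule :=
      Submodule.eq_of_le_of_finrank_le inf_le_right (by omega)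
    exact h (submodule_injective (e1 ▸ e2))
  have := Submodule.finrank_sup_add_finrank_inf_eq x.submodule y.submodule
  rw [hinf] at this
  simpa [hx, hy] using this

lemma line_unique {g : Set (ℙ K V)} (hg : g ∈ projLines K V) {x y : ℙ K V}
    (hx : x ∈ g) (hy : y ∈ g) (hxy : x ≠ y) : g = projLineThrough x y := by
  obtain ⟨a, b, hab, rfl⟩ := hg
  have hle : x.submodule ⊔ y.submodule ≤ a.submodule ⊔ b.submodule := sup_le hx hy
  have : x.submodule ⊔ y.submodule = a.submodule ⊔ b.submodule :=
    Submodule.eq_of_le_of_finrank_le hle (by rw [finrank_sup_point hab, finrank_sup_point hxy])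
  unfold projLineThrough
  rw [this]

lemma lineThru_proj {x y : ℙ K V} (hxy : x ≠ y) :
    lineThru (projLines K V) x y = projLineThrough x y := by
  apply subset_antisymm
  · intro z hz
    simp only [lineThru, mem_iUnion, mem_sep_iff, exists_prop] at hz
    obtain ⟨g, ⟨hg, hxg, hyg⟩, hzg⟩ := hz
    rwa [line_unique hg hxg hyg hxy] at hzg
  · intro z hz
    simp only [lineThru, mem_iUnion, mem_sep_iff, exists_prop]
    exact ⟨projLineThrough x y, ⟨projLineThrough_mem hxy, mem_projLineThrough_left _ _,
      mem_projLineThrough_right _ _⟩, hz⟩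

lemma sJoin_pair {x y : ℙ K V} (hxy : x ≠ y) :
    sJoin (projLines K V) {x} {y} = projLineThrough x y := by
  apply subset_antisymm
  · rintro z (⟨rfl | rfl⟩ | hz)
    · exact mem_projLineThrough_left _ _
    · exact mem_projLineThrough_right _ _
    · simp only [mem_iUnion, mem_singleton_iff, exists_prop] at hz
      obtain ⟨x', rfl, y', rfl, -, hz⟩ := hz
      rwa [lineThru_proj hxy] at hz
  · intro z hz
    refine Or.inr ?_
    simp only [mem_iUnion, mem_singleton_iff, exists_prop]
    exact ⟨x, rfl, y, rfl, ⟨hxy, collin_proj hxy⟩, by rwa [lineThru_proj hxy]⟩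

lemma submodule_le_spanOf {M : Set (ℙ K V)} {x : ℙ K V} (h : x ∈ M) :
    x.submodule ≤ spanOf M := le_biSup _ h

lemma spanOf_le {M : Set (ℙ K V)} {U : Submodule K V} (h : ∀ x ∈ M, x.submodule ≤ U) :
    spanOf M ≤ U := iSup₂_le h

lemma spanOf_mono {M N : Set (ℙ K V)} (h : M ⊆ N) : spanOf M ≤ spanOf N :=
  spanOf_le fun x hx => submodule_le_spanOf (h hx)

@[simp] lemma spanOf_empty : spanOf (∅ : Set (ℙ K V)) = ⊥ := by simp [spanOf]

@[simp] lemma spanOf_singleton (x : ℙ K V) : spanOf ({x} : Set (ℙ K V)) = x.submodule := by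
  simp [spanOf]

lemma sJoin_subset_span (M₁ M₂ : Set (ℙ K V)) :
    sJoin (projLines K V) M₁ M₂ ⊆ {r : ℙ K V | r.submodule ≤ spanOf M₁ ⊔ spanOf M₂} := by
  rintro r (⟨h | h⟩ | h)
  · exact le_trans (submodule_le_spanOf h) le_sup_left
  · exact le_trans (submodule_le_spanOf h) le_sup_right
  · simp only [mem_iUnion, exists_prop] at h
    obtain ⟨x, hx, y, hy, ⟨hne, -⟩, hr⟩ := h
    rw [lineThru_proj hne] at hr
    exact le_trans hr (sup_le_sup (submodule_le_spanOf hx) (submodule_le_spanOf hy))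

end ProjAux

section PtImgAux

variable {P : Type*} {K V : Type*} [Field K] [AddCommGroup V] [Module K V]

lemma ptImg_none {σ : P → Option (ℙ K V)} {X : P} (h : σ X = none) : ptImg σ X = ∅ := by
  ext q; simp [ptImg, h]

lemma ptImg_some {σ : P → Option (ℙ K V)} {X : P} {q : ℙ K V} (h : σ X = some q) :
    ptImg σ X = {q} := by
  ext r; simp [ptImg, h, eq_comm]

lemma ptImg_subset_mapSet {σ : P → Option (ℙ K V)} {X : P} {M : Set P} (h : X ∈ M) :
    ptImg σ X ⊆ mapSet σ M := fun q hq => mem_biUnion h hq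

lemma ptImg_congr {Q' : Type*} {σ τ : P → Option Q'} {X : P} (h : σ X = τ X) :
    ptImg σ X = ptImg τ X := by
  unfold ptImg; rw [h]

lemma mem_mapSet_iff {σ : P → Option (ℙ K V)} {M : Set P} {q : ℙ K V} :
    q ∈ mapSet σ M ↔ ∃ X ∈ M, σ X = some q := by
  simp [mapSet, ptImg]

end PtImgAux


section LinMapAux

variable {F V K W : Type*} [Field F] [AddCommGroup V] [Module F V]
  [Field K] [AddCommGroup W] [Module K W]

open Projectivization

/-- Axiom (L1) specialized: the image of the line through two distinct points is the
join of the two image point sets. -/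
def HypL1 (σ : ℙ F V → Option (ℙ K W)) : Prop :=
  ∀ X Y : ℙ F V, X ≠ Y →
    mapSet σ (projLineThrough X Y) = sJoin (projLines K W) (ptImg σ X) (ptImg σ Y)

/-- Axiom (L2) specialized. -/
def HypL2 (σ : ℙ F V → Option (ℙ K W)) : Prop :=
  ∀ X Y : ℙ F V, X ≠ Y → ptImg σ X = ptImg σ Y →
    ∃ Z ∈ projLineThrough X Y, σ Z = none

lemma lemA {σ : ℙ F V → Option (ℙ K W)} (hσ : HypL1 σ) :
    ∀ (k : ℕ) (v : Fin k → V) (hv : ∀ i, v i ≠ 0) (Z : ℙ F V),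
      Z.rep ∈ Submodule.span F (Set.range v) →
      spanOf (ptImg σ Z) ≤ ⨆ i, spanOf (ptImg σ (Projectivization.mk F (v i) (hv i))) := by
  intro k
  induction k with
  | zero =>
    intro v hv Z hZ
    rw [Set.range_eq_empty, Submodule.span_empty, Submodule.mem_bot] at hZ
    exact absurd hZ Z.rep_nonzero
  | succ k ih =>
    intro v hv Z hZ
    obtain ⟨c, hc⟩ := (Submodule.mem_span_range_iff_exists_fun F).1 hZ
    set z' : V := ∑ i : Fin k, c i.castSucc • v i.castSucc with hz'
    have hsum : z' + c (Fin.last k) • v (Fin.last k) = Z.rep := by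
      rw [hz', ← hc, Fin.sum_univ_castSucc]
    by_cases h0 : z' = 0
    · have hck : c (Fin.last k) ≠ 0 := by
        intro h; apply Z.rep_nonzero; rw [← hsum, h0, h, zero_smul, add_zero]
      have hZeq : Z = Projectivization.mk F (v (Fin.last k)) (hv _) := by
        rw [← Projectivization.mk_rep Z, Projectivization.mk_eq_mk_iff]
        exact ⟨Units.mk0 (c (Fin.last k)) hck, by
          rw [← hsum, h0, zero_add]; rfl⟩
      rw [hZeq]
      exact le_iSup (fun i => spanOf (ptImg σ (Projectivization.mk F (v i) (hv i))))
        (Fin.last k)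
    · set Z' := Projectivization.mk F z' h0 with hZ'def
      have hZ'le : spanOf (ptImg σ Z') ≤
          ⨆ i : Fin (k+1), spanOf (ptImg σ (Projectivization.mk F (v i) (hv i))) := by
        refine le_trans (ih (fun i => v i.castSucc) (fun i => hv _) Z' ?_) ?_
        · obtain ⟨a, ha⟩ := Projectivization.exists_smul_eq_mk_rep F z' h0
          rw [← hZ'def] at ha
          rw [← ha]
          refine Submodule.smul_mem _ _ ?_
          rw [hz']
          exact Submodule.sum_mem _ fun i _ => Submodule.smul_mem _ _
            (Submodule.subset_span ⟨i, rfl⟩)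
        · exact iSup_le fun i =>
            le_iSup (fun j => spanOf (ptImg σ (Projectivization.mk F (v j) (hv j)))) i.castSucc
      by_cases hck : c (Fin.last k) = 0
      · have hzz : z' = Z.rep := by rw [← hsum, hck, zero_smul, add_zero]
        have : Z = Z' := by
          rw [hZ'def, ← Projectivization.mk_rep Z, Projectivization.mk_eq_mk_iff]
        -- need ∃ a, a • Z.rep = z'... since z' = Z.rep: a = 1
          exact ⟨1, by rw [← hzz, one_smul]⟩
        rw [this]; exact hZ'le
      · set Pk := Projectivization.mk F (v (Fin.last k)) (hv _) with hPk
        by_cases hZP : Z' = Pk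
        · obtain ⟨a, ha⟩ := (Projectivization.mk_eq_mk_iff F _ _ _ _).1 (hZ'def ▸ hZP)
          have hrep : Z.rep = ((a : F) + c (Fin.last k)) • v (Fin.last k) := by
            rw [← hsum, ← ha, add_smul]; rfl
          have hne : (a : F) + c (Fin.last k) ≠ 0 := by
            intro h; apply Z.rep_nonzero; rw [hrep, h, zero_smul]
          have hZeq : Z = Pk := by
            rw [hPk, ← Projectivization.mk_rep Z, Projectivization.mk_eq_mk_iff]
            exact ⟨Units.mk0 _ hne, by rw [hrep]; rfl⟩
          rw [hZeq]
          exact le_iSup (fun j => spanOf (ptImg σ (Projectivization.mk F (v j) (hv j))))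
            (Fin.last k)
        · have hZmem : Z ∈ projLineThrough Z' Pk := by
            simp only [projLineThrough, mem_setOf_eq]
            rw [Projectivization.submodule_eq Z, hZ'def, hPk,
              Projectivization.submodule_mk, Projectivization.submodule_mk]
            rw [Submodule.span_singleton_le_iff_mem]
            rw [← hsum]
            exact Submodule.add_mem _
              (Submodule.mem_sup_left (Submodule.mem_span_singleton_self _))
              (Submodule.mem_sup_right (Submodule.smul_mem _ _
                (Submodule.mem_span_singleton_self _)))
          have hsub : ptImg σ Z ⊆ mapSet σ (projLineThrough Z' Pk) :=
            ptImg_subset_mapSet hZmem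
          rw [hσ Z' Pk hZP] at hsub
          have hsub2 := subset_trans hsub (sJoin_subset_span _ _)
          have hle : spanOf (ptImg σ Z) ≤ spanOf (ptImg σ Z') ⊔ spanOf (ptImg σ Pk) :=
            spanOf_le fun r hr => hsub2 hr
          refine hle.trans (sup_le hZ'le ?_)
          rw [hPk]
          exact le_iSup (fun j => spanOf (ptImg σ (Projectivization.mk F (v j) (hv j))))
            (Fin.last k)

lemma lemB {σ : ℙ F V → Option (ℙ K W)} (hσ : HypL1 σ) :
    ∀ (k : ℕ) (v : Fin k → W) (hv : ∀ i, v i ≠ 0)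
      (_ : ∀ i, Projectivization.mk K (v i) (hv i) ∈ mapSet σ univ) (q : ℙ K W),
      q.rep ∈ Submodule.span K (Set.range v) → q ∈ mapSet σ univ := by
  intro k
  induction k with
  | zero =>
    intro v hv hIm q hq
    rw [Set.range_eq_empty, Submodule.span_empty, Submodule.mem_bot] at hq
    exact absurd hq q.rep_nonzero
  | succ k ih =>
    intro v hv hIm q hq
    obtain ⟨c, hc⟩ := (Submodule.mem_span_range_iff_exists_fun K).1 hq
    set z' : W := ∑ i : Fin k, c i.castSucc • v i.castSucc with hz'
    have hsum : z' + c (Fin.last k) • v (Fin.last k) = q.rep := by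
      rw [hz', ← hc, Fin.sum_univ_castSucc]
    by_cases h0 : z' = 0
    · have hck : c (Fin.last k) ≠ 0 := by
        intro h; apply q.rep_nonzero; rw [← hsum, h0, h, zero_smul, add_zero]
      have hqeq : q = Projectivization.mk K (v (Fin.last k)) (hv _) := by
        rw [← Projectivization.mk_rep q, Projectivization.mk_eq_mk_iff]
        exact ⟨Units.mk0 (c (Fin.last k)) hck, by rw [← hsum, h0, zero_add]; rfl⟩
      rw [hqeq]; exact hIm (Fin.last k)
    · set q' := Projectivization.mk K z' h0 with hq'def
      have hq'mem : q' ∈ mapSet σ univ := by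
        refine ih (fun i => v i.castSucc) (fun i => hv _) (fun i => hIm i.castSucc) q' ?_
        obtain ⟨a, ha⟩ := Projectivization.exists_smul_eq_mk_rep K z' h0
        rw [← hq'def] at ha
        rw [← ha]
        refine Submodule.smul_mem _ _ ?_
        rw [hz']
        exact Submodule.sum_mem _ fun i _ => Submodule.smul_mem _ _
          (Submodule.subset_span ⟨i, rfl⟩)
      by_cases hck : c (Fin.last k) = 0
      · have hzz : z' = q.rep := by rw [← hsum, hck, zero_smul, add_zero]
        have : q = q' := by
          rw [hq'def, ← Projectivization.mk_rep q, Projectivization.mk_eq_mk_iff]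
          exact ⟨1, by rw [← hzz, one_smul]⟩
        rw [this]; exact hq'mem
      · set Pk := Projectivization.mk K (v (Fin.last k)) (hv _) with hPk
        by_cases hqP : q' = Pk
        · obtain ⟨a, ha⟩ := (Projectivization.mk_eq_mk_iff K _ _ _ _).1 (hq'def ▸ hqP)
          have hrep : q.rep = ((a : K) + c (Fin.last k)) • v (Fin.last k) := by
            rw [← hsum, ← ha, add_smul]; rfl
          have hne : (a : K) + c (Fin.last k) ≠ 0 := by
            intro h; apply q.rep_nonzero; rw [hrep, h, zero_smul]
          have hqeq : q = Pk := by
            rw [hPk, ← Projectivization.mk_rep q, Projectivization.mk_eq_mk_iff]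
            exact ⟨Units.mk0 _ hne, by rw [hrep]; rfl⟩
          rw [hqeq]; exact hIm (Fin.last k)
        · -- q lies on the line through q' and Pk, both in the image
          obtain ⟨X', -, hX'⟩ := mem_mapSet_iff.1 hq'mem
          obtain ⟨Xk, -, hXk⟩ := mem_mapSet_iff.1 (hIm (Fin.last k))
          have hXne : X' ≠ Xk := by
            intro h; apply hqP
            rw [h] at hX'; rw [hX'] at hXk; exact Option.some_injective _ hXk
          have hline := hσ X' Xk hXne
          rw [ptImg_some hX', ptImg_some hXk, sJoin_pair hqP] at hline
          have hqmem : q ∈ projLineThrough q' Pk := by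
            simp only [projLineThrough, mem_setOf_eq]
            rw [Projectivization.submodule_eq q, hq'def, hPk,
              Projectivization.submodule_mk, Projectivization.submodule_mk,
              Submodule.span_singleton_le_iff_mem, ← hsum]
            exact Submodule.add_mem _
              (Submodule.mem_sup_left (Submodule.mem_span_singleton_self _))
              (Submodule.mem_sup_right (Submodule.smul_mem _ _
                (Submodule.mem_span_singleton_self _)))
          rw [← hline] at hqmem
          obtain ⟨X, -, hX⟩ := mem_mapSet_iff.1 hqmem
          exact mem_mapSet_iff.2 ⟨X, trivial, hX⟩

end LinMapAux


section Structural

variable {F V K W : Type*} [Field F] [AddCommGroup V] [Module F V]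
  [Field K] [AddCommGroup W] [Module K W]

open Projectivization

/-- A representative vector of the image point, or `0` for an exceptional point. -/
noncomputable def optVec (σ : ℙ F V → Option (ℙ K W)) (X : ℙ F V) : W :=
  (σ X).elim 0 Projectivization.rep

lemma spanOf_ptImg_eq (σ : ℙ F V → Option (ℙ K W)) (X : ℙ F V) :
    spanOf (ptImg σ X) = Submodule.span K {optVec σ X} := by
  cases h : σ X with
  | none => rw [ptImg_none h, spanOf_empty, optVec, h, Option.elim,
      Submodule.span_zero_singleton]
  | some q => rw [ptImg_some h, spanOf_singleton, optVec, h, Option.elim, submodule_eq]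

lemma spanOf_mapSet_le_iSup {σ : ℙ F V → Option (ℙ K W)} (hσ : HypL1 σ)
    {k : ℕ} (P : Fin k → ℙ F V) (hP : ⨆ i, (P i).submodule = ⊤) :
    spanOf (mapSet σ univ) ≤ ⨆ i, spanOf (ptImg σ (P i)) := by
  refine spanOf_le fun q hq => ?_
  obtain ⟨X, -, hX⟩ := mem_mapSet_iff.1 hq
  have h1 : q.submodule = spanOf (ptImg σ X) := by rw [ptImg_some hX, spanOf_singleton]
  rw [h1]
  have hrep : X.rep ∈ Submodule.span F (Set.range fun i => (P i).rep) := by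
    have : Submodule.span F (Set.range fun i => (P i).rep) = ⊤ := by
      rw [Submodule.span_range_eq_iSup]
      rw [← hP]
      congr 1; funext i; rw [← submodule_eq]
    rw [this]; trivial
  have := lemA hσ k (fun i => (P i).rep) (fun i => (P i).rep_nonzero) X hrep
  refine this.trans ?_
  refine iSup_mono fun i => ?_
  rw [Projectivization.mk_rep]

lemma spanOf_mapSet_eq_iSup {σ : ℙ F V → Option (ℙ K W)} (hσ : HypL1 σ)
    {k : ℕ} (P : Fin k → ℙ F V) (hP : ⨆ i, (P i).submodule = ⊤) :
    spanOf (mapSet σ univ) = ⨆ i, spanOf (ptImg σ (P i)) := by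
  refine le_antisymm (spanOf_mapSet_le_iSup hσ P hP) (iSup_le fun i => ?_)
  exact spanOf_mono (ptImg_subset_mapSet trivial)

lemma rank_iSup_ptImg_le (σ : ℙ F V → Option (ℙ K W)) {k : ℕ} (P : Fin k → ℙ F V) :
    Module.rank K ↥(⨆ i, spanOf (ptImg σ (P i))) ≤ k := by
  have h1 : (⨆ i, spanOf (ptImg σ (P i))) =
      Submodule.span K (Set.range fun i => optVec σ (P i)) := by
    rw [Submodule.span_range_eq_iSup]
    congr 1; funext i; rw [spanOf_ptImg_eq]
  rw [h1]
  haveI := FiniteDimensional.span_of_finite K (Set.finite_range fun i => optVec σ (P i))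
  rw [← Module.finrank_eq_rank]
  exact Nat.cast_le.2 (le_trans (finrank_range_le_card _) (by simp))

/-- If the map has an exceptional point, yet has finite-dimensional source of
dimension `m+1`, then the rank of its image span is at most `m`. -/
lemma rank_le_of_exceptional [FiniteDimensional F V] {m : ℕ}
    (hdim : Module.finrank F V = m + 1)
    {σ : ℙ F V → Option (ℙ K W)} (hσ : HypL1 σ) {X₀ : ℙ F V} (h0 : σ X₀ = none) :
    Module.rank K ↥(spanOf (mapSet σ univ)) ≤ m := by
  classical
  -- build a basis of V through X₀.rep
  have hx0 : X₀.rep ≠ 0 := X₀.rep_nonzero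
  have li : LinearIndepOn F id ({X₀.rep} : Set V) :=
    (linearIndepOn_singleton_iff F).2 hx0
  let b0 := Module.Basis.extend li
  haveI : Fintype ↥(li.extend (Set.subset_univ _)) :=
    FiniteDimensional.fintypeBasisIndex b0
  have hcard : Fintype.card ↥(li.extend (Set.subset_univ _)) = m + 1 := by
    rw [← Module.finrank_eq_card_basis b0, hdim]
  let e := Fintype.equivFinOfCardEq hcard
  let b := b0.reindex e
  have hmem : X₀.rep ∈ li.extend (Set.subset_univ _) :=
    li.subset_extend _ rfl
  set j₀ : Fin (m + 1) := e ⟨X₀.rep, hmem⟩ with hj₀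
  have hbj : b j₀ = X₀.rep := by
    rw [hj₀]
    simp only [b, Module.Basis.coe_reindex, Function.comp_apply, Equiv.symm_apply_apply]
    exact Module.Basis.extend_apply_self li ⟨X₀.rep, hmem⟩
  -- the point family
  let P : Fin (m + 1) → ℙ F V := fun i => Projectivization.mk F (b i) (b.ne_zero i)
  have hP : ⨆ i, (P i).submodule = ⊤ := by
    rw [← b.span_eq, Submodule.span_range_eq_iSup]
    try rfl
  have hle := spanOf_mapSet_le_iSup hσ P hP
  -- the j₀-th image is empty
  have hPj : P j₀ = X₀ := by
    refine Projectivization.submodule_injective ?_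
    rw [show (P j₀).submodule = Submodule.span F {b j₀} from
      Projectivization.submodule_mk _ _, hbj, ← Projectivization.submodule_eq]
  -- bound the rank of the sup
  have hbound : Module.rank K ↥(⨆ i, spanOf (ptImg σ (P i))) ≤ m := by
    have h1 : (⨆ i, spanOf (ptImg σ (P i))) =
        Submodule.span K (Set.range fun i => optVec σ (P i)) := by
      rw [Submodule.span_range_eq_iSup]
      congr 1; funext i; rw [spanOf_ptImg_eq]
    have hz : optVec σ (P j₀) = 0 := by rw [hPj, optVec, h0]; rfl
    have h2 : Set.range (fun i => optVec σ (P i)) ⊆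
        insert 0 ((fun i => optVec σ (P i)) '' ({j₀}ᶜ : Set (Fin (m+1)))) := by
      rintro x ⟨i, rfl⟩
      by_cases hi : i = j₀
      · show optVec σ (P i) ∈ _
        rw [hi, hz]; exact mem_insert _ _
      · exact mem_insert_of_mem _ ⟨i, hi, rfl⟩
    rw [h1]
    refine le_trans (Submodule.rank_mono (Submodule.span_mono h2)) ?_
    rw [Submodule.span_insert_zero]
    have himg : (fun i => optVec σ (P i)) '' ({j₀}ᶜ : Set (Fin (m+1))) =
        Set.range (fun x : ({j₀}ᶜ : Set (Fin (m+1))) => optVec σ (P x)) := by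
      rw [Set.image_eq_range]
    rw [himg]
    haveI := FiniteDimensional.span_of_finite K
      (Set.finite_range fun x : ({j₀}ᶜ : Set (Fin (m+1))) => optVec σ (P x))
    rw [← Module.finrank_eq_rank]
    refine Nat.cast_le.2 (le_trans (finrank_range_le_card _) ?_)
    have hcc : Fintype.card ({j₀}ᶜ : Set (Fin (m+1))) = m := by
      rw [Fintype.card_compl_set, Set.card_singleton, Fintype.card_fin]
      omega
    rw [hcc]
  exact le_trans (Submodule.rank_mono hle) hbound

lemma global_of_rank [FiniteDimensional F V] {m : ℕ}
    (hdim : Module.finrank F V = m + 1)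
    {σ : ℙ F V → Option (ℙ K W)} (hσ : HypL1 σ)
    (hrank : Module.rank K ↥(spanOf (mapSet σ univ)) = (m : Cardinal) + 1) :
    ∀ X, σ X ≠ none := by
  intro X hX
  have h1 := rank_le_of_exceptional hdim hσ hX
  rw [hrank] at h1
  have : ((m : Cardinal) + 1 : Cardinal) ≤ (m : Cardinal) := h1
  have h2 : (m : Cardinal) < (m : Cardinal) + 1 := by
    have h := (Nat.cast_lt (α := Cardinal)).2 (Nat.lt_succ_self m)
    rwa [Nat.cast_succ] at h
  exact absurd this (not_le.2 h2)

lemma inj_of_global {σ : ℙ F V → Option (ℙ K W)} (hσ2 : HypL2 σ)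
    (hglob : ∀ X, σ X ≠ none) {X Y : ℙ F V} {q : ℙ K W}
    (hX : σ X = some q) (hY : σ Y = some q) : X = Y := by
  by_contra hne
  obtain ⟨Z, -, hZ⟩ := hσ2 X Y hne (by rw [ptImg_some hX, ptImg_some hY])
  exact hglob Z hZ

lemma surj_of_global [FiniteDimensional F V] {σ : ℙ F V → Option (ℙ K W)}
    (hσ : HypL1 σ) (hglob : ∀ X, σ X ≠ none) {q : ℙ K W}
    (hq : q.submodule ≤ spanOf (mapSet σ univ)) : q ∈ mapSet σ univ := by
  classical
  let b := Module.finBasis F V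
  let P : Fin (Module.finrank F V) → ℙ F V := fun i =>
    Projectivization.mk F (b i) (b.ne_zero i)
  have hP : ⨆ i, (P i).submodule = ⊤ := by
    rw [← b.span_eq, Submodule.span_range_eq_iSup]
    try rfl
  have hEq := spanOf_mapSet_eq_iSup hσ P hP
  -- each image is a point
  have himg : ∀ i, ∃ r : ℙ K W, σ (P i) = some r := fun i =>
    Option.ne_none_iff_exists'.1 (hglob (P i))
  choose r hr using himg
  have hvec : ∀ i, optVec σ (P i) = (r i).rep := fun i => by rw [optVec, hr i]; rfl
  have hnz : ∀ i, optVec σ (P i) ≠ 0 := fun i => by rw [hvec i]; exact (r i).rep_nonzero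
  have hIm : ∀ i, Projectivization.mk K (optVec σ (P i)) (hnz i) ∈ mapSet σ univ := by
    intro i
    have : Projectivization.mk K (optVec σ (P i)) (hnz i) = r i := by
      have h2 : Projectivization.mk K (optVec σ (P i)) (hnz i) =
          Projectivization.mk K (r i).rep (r i).rep_nonzero := by congr 1; exact hvec i
      rw [h2, Projectivization.mk_rep]
    rw [this]
    exact mem_mapSet_iff.2 ⟨P i, trivial, hr i⟩
  refine lemB hσ _ (fun i => optVec σ (P i)) hnz hIm q ?_
  have hspan : Submodule.span K (Set.range fun i => optVec σ (P i)) =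
      spanOf (mapSet σ univ) := by
    rw [hEq, Submodule.span_range_eq_iSup]
    congr 1; funext i; rw [spanOf_ptImg_eq]
  rw [hspan]
  exact hq (by rw [submodule_eq]; exact Submodule.mem_span_singleton_self _)

lemma mapSet_subset_span {σ : ℙ F V → Option (ℙ K W)} :
    ∀ q ∈ mapSet σ univ, q.submodule ≤ spanOf (mapSet σ univ) := fun _ hq =>
  submodule_le_spanOf hq

end Structural


section Product

variable {P₁ : Type*} {F V K W : Type*} [Field F] [AddCommGroup V] [Module F V]
  [Field K] [AddCommGroup W] [Module K W]

open Projectivization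

lemma prod_lineThru_vert {L₁ : Set (Set P₁)} {A : P₁} {X Y : ℙ F V} (hXY : X ≠ Y) :
    lineThru (prodLines L₁ (projLines F V)) (A, X) (A, Y) =
      ({A} : Set P₁) ×ˢ projLineThrough X Y := by
  ext ⟨a, z⟩
  constructor
  · intro hz
    simp only [lineThru, mem_iUnion, mem_sep_iff, exists_prop] at hz
    obtain ⟨g, ⟨hg, hXg, hYg⟩, hzg⟩ := hz
    rcases hg with ⟨X₁, g₂, hg₂, rfl⟩ | ⟨g₁, hg₁, X₂, rfl⟩
    · rw [mem_prod] at hXg hYg hzg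
      obtain ⟨hA, hXg⟩ := hXg
      obtain ⟨-, hYg⟩ := hYg
      obtain ⟨ha, hzg⟩ := hzg
      rw [mem_singleton_iff] at hA ha
      rw [line_unique hg₂ hXg hYg hXY] at hzg
      exact ⟨by rw [ha, ← hA]; rfl, hzg⟩
    · rw [mem_prod] at hXg hYg
      exact absurd (hXg.2.trans hYg.2.symm) (by simpa using hXY)
  · rintro ⟨ha, hz⟩
    simp only [lineThru, mem_iUnion, mem_sep_iff, exists_prop]
    refine ⟨({A} : Set P₁) ×ˢ projLineThrough X Y,
      ⟨Or.inl ⟨A, projLineThrough X Y, projLineThrough_mem hXY, rfl⟩,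
        ⟨rfl, mem_projLineThrough_left X Y⟩, ⟨rfl, mem_projLineThrough_right X Y⟩⟩,
      ha, hz⟩

lemma collin_prod_vert {L₁ : Set (Set P₁)} {A : P₁} {X Y : ℙ F V} (hXY : X ≠ Y) :
    Collin (prodLines L₁ (projLines F V)) (A, X) (A, Y) :=
  ⟨({A} : Set P₁) ×ˢ projLineThrough X Y,
    Or.inl ⟨A, projLineThrough X Y, projLineThrough_mem hXY, rfl⟩,
    ⟨rfl, mem_projLineThrough_left X Y⟩, ⟨rfl, mem_projLineThrough_right X Y⟩⟩

lemma prod_sJoin_vert {L₁ : Set (Set P₁)} {A : P₁} {X Y : ℙ F V} (hXY : X ≠ Y) :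
    sJoin (prodLines L₁ (projLines F V)) {(A, X)} {(A, Y)} =
      ({A} : Set P₁) ×ˢ projLineThrough X Y := by
  apply subset_antisymm
  · rintro ⟨a, z⟩ (⟨h | h⟩ | h)
    · rw [mem_singleton_iff] at h
      rw [h]
      exact ⟨rfl, mem_projLineThrough_left X Y⟩
    · rw [mem_singleton_iff] at h
      rw [h]
      exact ⟨rfl, mem_projLineThrough_right X Y⟩
    · simp only [mem_iUnion, mem_singleton_iff, exists_prop] at h
      obtain ⟨x', rfl, y', rfl, -, hz⟩ := h
      rwa [prod_lineThru_vert hXY] at hz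
  · intro z hz
    refine Or.inr ?_
    simp only [mem_iUnion, mem_singleton_iff, exists_prop]
    refine ⟨(A, X), rfl, (A, Y), rfl, ⟨by simpa using hXY, collin_prod_vert hXY⟩, ?_⟩
    rwa [prod_lineThru_vert hXY]

lemma mapSet_vert {S Q : Type*} (χ : P₁ × S → Option Q) (A : P₁) (M : Set S) :
    mapSet χ (({A} : Set P₁) ×ˢ M) = mapSet (fun z => χ (A, z)) M := by
  ext q
  simp only [mapSet, mem_iUnion, exists_prop, ptImg, mem_setOf_eq]
  constructor
  · rintro ⟨⟨a, z⟩, ⟨ha, hz⟩, hq⟩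
    rw [mem_singleton_iff] at ha
    subst ha
    exact ⟨z, hz, hq⟩
  · rintro ⟨z, hz, hq⟩
    exact ⟨(A, z), ⟨rfl, hz⟩, hq⟩

lemma mapSet_comp {S T Q : Type*} (φ : T → Option Q) (γ : S → T) (M : Set S) :
    mapSet (fun p => φ (γ p)) M = mapSet φ (γ '' M) := by
  ext q
  simp only [mapSet, mem_iUnion, exists_prop, ptImg, mem_setOf_eq]
  constructor
  · rintro ⟨z, hz, hq⟩; exact ⟨γ z, ⟨z, hz, rfl⟩, hq⟩
  · rintro ⟨t, ⟨z, hz, rfl⟩, hq⟩; exact ⟨z, hz, hq⟩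

lemma mapSet_someFn {S T : Type*} (γ : S → T) (M : Set S) :
    mapSet (fun p => (some (γ p) : Option T)) M = γ '' M := by
  ext q
  simp only [mapSet, mem_iUnion, exists_prop, ptImg, mem_setOf_eq, Option.some_inj]
  constructor
  · rintro ⟨z, hz, rfl⟩; exact ⟨z, hz, rfl⟩
  · rintro ⟨z, hz, rfl⟩; exact ⟨z, hz, rfl⟩

/-- The restriction of a linear map of a product to a vertical copy satisfies (L1). -/
lemma hypL1_vert {L₁ : Set (Set P₁)} {χ : P₁ × ℙ F V → Option (ℙ K W)}
    (hχ : IsLinMap (prodLines L₁ (projLines F V)) (projLines K W) χ) (A : P₁) :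
    HypL1 (fun z => χ (A, z)) := by
  intro X Y hXY
  have h := hχ.1 (A, X) (A, Y) (collin_prod_vert hXY)
  rw [prod_sJoin_vert hXY, mapSet_vert] at h
  exact h

/-- The restriction of a linear map of a product to a vertical copy satisfies (L2). -/
lemma hypL2_vert {L₁ : Set (Set P₁)} {χ : P₁ × ℙ F V → Option (ℙ K W)}
    (hχ : IsLinMap (prodLines L₁ (projLines F V)) (projLines K W) χ) (A : P₁) :
    HypL2 (fun z => χ (A, z)) := by
  intro X Y hXY heq
  obtain ⟨Z, hZ, hZnone⟩ := hχ.2 (A, X) (A, Y) (collin_prod_vert hXY)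
    (by simpa using hXY) heq
  rw [prod_lineThru_vert hXY] at hZ
  obtain ⟨Z₁, Z₂⟩ := Z
  obtain ⟨hZ₁, hZ₂⟩ := hZ
  rw [mem_singleton_iff] at hZ₁
  subst hZ₁
  exact ⟨Z₂, hZ₂, hZnone⟩

variable {U : Type*} [AddCommGroup U] [Module F U]

/-- The composite `φ ∘ γ`, restricted to a vertical copy, satisfies (L1). -/
lemma hypL1_comp {L₁ : Set (Set P₁)} {γ : P₁ × ℙ F V → ℙ F U}
    (hγ : IsLinMap (prodLines L₁ (projLines F V)) (projLines F U) (fun p => some (γ p)))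
    (hγinj : Function.Injective γ)
    {φ : ℙ F U → Option (ℙ K W)} (hφ : IsLinMap (projLines F U) (projLines K W) φ)
    (A : P₁) : HypL1 (fun z => φ (γ (A, z))) := by
  intro X Y hXY
  have hne : γ (A, X) ≠ γ (A, Y) := fun h => hXY (by simpa using hγinj h)
  -- the image of the vertical line under γ is a projective line
  have himg : γ '' (({A} : Set P₁) ×ˢ projLineThrough X Y) =
      projLineThrough (γ (A, X)) (γ (A, Y)) := by
    have h := hγ.1 (A, X) (A, Y) (collin_prod_vert hXY)
    rw [prod_sJoin_vert hXY, mapSet_someFn,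
      ptImg_some (σ := fun p => some (γ p)) (X := (A, X)) (q := γ (A, X)) rfl,
      ptImg_some (σ := fun p => some (γ p)) (X := (A, Y)) (q := γ (A, Y)) rfl,
      sJoin_pair hne] at h
    exact h
  have h2 := hφ.1 (γ (A, X)) (γ (A, Y)) (collin_proj hne)
  rw [sJoin_pair hne] at h2
  calc mapSet (fun z => φ (γ (A, z))) (projLineThrough X Y)
      = mapSet (fun p : P₁ × ℙ F V => φ (γ p)) (({A} : Set P₁) ×ˢ projLineThrough X Y) :=
        (mapSet_vert (fun p : P₁ × ℙ F V => φ (γ p)) A (projLineThrough X Y)).symm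
    _ = mapSet φ (γ '' (({A} : Set P₁) ×ˢ projLineThrough X Y)) := mapSet_comp _ _ _
    _ = mapSet φ (projLineThrough (γ (A, X)) (γ (A, Y))) := by rw [himg]
    _ = sJoin (projLines K W) (ptImg φ (γ (A, X))) (ptImg φ (γ (A, Y))) := h2

/-- The composite `φ ∘ γ`, restricted to a vertical copy, satisfies (L2). -/
lemma hypL2_comp {L₁ : Set (Set P₁)} {γ : P₁ × ℙ F V → ℙ F U}
    (hγ : IsLinMap (prodLines L₁ (projLines F V)) (projLines F U) (fun p => some (γ p)))
    (hγinj : Function.Injective γ)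
    {φ : ℙ F U → Option (ℙ K W)} (hφ : IsLinMap (projLines F U) (projLines K W) φ)
    (A : P₁) : HypL2 (fun z => φ (γ (A, z))) := by
  intro X Y hXY heq
  have hne : γ (A, X) ≠ γ (A, Y) := fun h => hXY (by simpa using hγinj h)
  obtain ⟨Z', hZ', hZnone⟩ := hφ.2 (γ (A, X)) (γ (A, Y)) (collin_proj hne) hne heq
  rw [lineThru_proj hne] at hZ'
  have himg : γ '' (({A} : Set P₁) ×ˢ projLineThrough X Y) =
      projLineThrough (γ (A, X)) (γ (A, Y)) := by
    have h := hγ.1 (A, X) (A, Y) (collin_prod_vert hXY)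
    rw [prod_sJoin_vert hXY, mapSet_someFn,
      ptImg_some (σ := fun p => some (γ p)) (X := (A, X)) (q := γ (A, X)) rfl,
      ptImg_some (σ := fun p => some (γ p)) (X := (A, Y)) (q := γ (A, Y)) rfl,
      sJoin_pair hne] at h
    exact h
  rw [← himg] at hZ'
  obtain ⟨⟨Z₁, Z₂⟩, ⟨hZ₁, hZ₂⟩, rfl⟩ := hZ'
  rw [mem_singleton_iff] at hZ₁
  subst hZ₁
  exact ⟨Z₂, hZ₂, hZnone⟩

end Product

section GlobalMaps

variable {F V K W : Type*} [Field F] [AddCommGroup V] [Module F V]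
  [Field K] [AddCommGroup W] [Module K W]

open Projectivization

/-- A global injective map with (L1) maps lines onto projective lines. -/
lemma mapSet_line {σ : ℙ F V → Option (ℙ K W)} (hσ1 : HypL1 σ)
    (hinj : ∀ {X Y : ℙ F V} {q : ℙ K W}, σ X = some q → σ Y = some q → X = Y)
    {X Y : ℙ F V} (hne : X ≠ Y) {p q : ℙ K W} (hX : σ X = some p) (hY : σ Y = some q) :
    mapSet σ (projLineThrough X Y) = projLineThrough p q := by
  have hpq : p ≠ q := fun h => hne (hinj hX (h ▸ hY))
  rw [hσ1 X Y hne, ptImg_some hX, ptImg_some hY, sJoin_pair hpq]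

lemma mapSet_cancel {σ : ℙ F V → Option (ℙ K W)} (hglob : ∀ X, σ X ≠ none)
    (hinj : ∀ {X Y : ℙ F V} {q : ℙ K W}, σ X = some q → σ Y = some q → X = Y)
    {M N : Set (ℙ F V)} (h : mapSet σ M = mapSet σ N) : M = N := by
  ext Z
  constructor
  · intro hZ
    obtain ⟨q, hq⟩ := Option.ne_none_iff_exists'.1 (hglob Z)
    have : q ∈ mapSet σ N := h ▸ mem_mapSet_iff.2 ⟨Z, hZ, hq⟩
    obtain ⟨Z', hZ', hq'⟩ := mem_mapSet_iff.1 this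
    rwa [hinj hq hq']
  · intro hZ
    obtain ⟨q, hq⟩ := Option.ne_none_iff_exists'.1 (hglob Z)
    have : q ∈ mapSet σ M := h.symm ▸ mem_mapSet_iff.2 ⟨Z, hZ, hq⟩
    obtain ⟨Z', hZ', hq'⟩ := mem_mapSet_iff.1 this
    rwa [hinj hq hq']

lemma mapSet_congr_fun {σ τ : ℙ F V → Option (ℙ K W)} (h : ∀ z, σ z = τ z)
    (M : Set (ℙ F V)) : mapSet σ M = mapSet τ M := by
  have : σ = τ := funext h
  rw [this]

/-- Key line-image lemma for the collineation argument. -/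
lemma line_image {σ τ : ℙ F V → Option (ℙ K W)} (hσ1 : HypL1 σ)
    (hσglob : ∀ X, σ X ≠ none)
    (hσinj : ∀ {X Y : ℙ F V} {q : ℙ K W}, σ X = some q → σ Y = some q → X = Y)
    (hτ1 : HypL1 τ) (hτglob : ∀ X, τ X ≠ none)
    (hτinj : ∀ {X Y : ℙ F V} {q : ℙ K W}, τ X = some q → τ Y = some q → X = Y)
    (α : ℙ F V → ℙ F V) (hα : ∀ z, σ (α z) = τ z)
    {g : Set (ℙ F V)} (hg : g ∈ projLines F V) : α '' g ∈ projLines F V := by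
  obtain ⟨X, Y, hne, rfl⟩ := hg
  obtain ⟨p, hp⟩ := Option.ne_none_iff_exists'.1 (hτglob X)
  obtain ⟨q, hq⟩ := Option.ne_none_iff_exists'.1 (hτglob Y)
  have hαne : α X ≠ α Y := by
    intro h
    have h3 : p = q := by
      have h1 : σ (α X) = some p := (hα X).trans hp
      have h2 : σ (α Y) = some q := (hα Y).trans hq
      rw [h] at h1
      exact Option.some_inj.1 (h1.symm.trans h2)
    exact hne (hτinj hp (hq.trans (congrArg some h3.symm)))
  have key : α '' projLineThrough X Y = projLineThrough (α X) (α Y) := by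
    apply mapSet_cancel hσglob hσinj
    have e1 : mapSet σ (α '' projLineThrough X Y) = mapSet τ (projLineThrough X Y) := by
      rw [← mapSet_comp]
      exact mapSet_congr_fun hα _
    rw [e1, mapSet_line hτ1 hτinj hne hp hq,
      mapSet_line hσ1 hσinj hαne ((hα X).trans hp) ((hα Y).trans hq)]
  rw [key]
  exact projLineThrough_mem hαne

end GlobalMaps


end Segre

open Segre Set in
/-- equations (evert) and (alfa1): `({A} × 𝒫₂)γφ = ({A} × 𝒫₂)χ`,
for every `X ∈ 𝒫₂` there is exactly one `Y ∈ 𝒫₂` with `(A, Y)χ = (A, X)γφ`, and the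
resulting map `α' : X ↦ Y` is a collineation of `ℙ₂`. -/
theorem statement_13 (F : Type*) [Field F] (n m : ℕ) (hn : 2 ≤ n) (hm : 1 ≤ m)
    (K W : Type*) [Field K] [AddCommGroup W] [Module K W]
    (χ : PGPt F n × PGPt F m → Option (Projectivization K W))
    (hχ : IsLinMap (prodLines (PGLines F n) (PGLines F m)) (projLines K W) χ)
    (B : Fin (m + 1) → PGPt F m) (E : Set (PGPt F n)) (hI : CondI F n m χ B E)
    (A : PGPt F n) (hII : CondII F n m χ A)
    (γ : PGPt F n × PGPt F m → PGPt F (n * m + n + m))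
    (hγ : IsRegularEmbedding F n m γ)
    (φ : PGPt F (n * m + n + m) → Option (Projectivization K W))
    (hφ : IsLinMap (PGLines F (n * m + n + m)) (projLines K W) φ)
    (hext : ∀ (X : PGPt F n) (i : Fin (m + 1)), φ (γ (X, B i)) = χ (X, B i)) :
    mapSet (fun q => φ (γ q)) (({A} : Set (PGPt F n)) ×ˢ (univ : Set (PGPt F m)))
      = mapSet χ (({A} : Set (PGPt F n)) ×ˢ (univ : Set (PGPt F m))) ∧
    (∀ X : PGPt F m, ∃! Y : PGPt F m, ptImg χ (A, Y) = ptImg φ (γ (A, X))) ∧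
    ∀ α' : PGPt F m → PGPt F m,
      (∀ X : PGPt F m, ptImg χ (A, α' X) = ptImg φ (γ (A, X))) →
      IsCollineation (PGLines F m) α' := by
  classical
  have hσ1 : HypL1 (fun z : PGPt F m => χ (A, z)) := hypL1_vert hχ A
  have hσ2 : HypL2 (fun z : PGPt F m => χ (A, z)) := hypL2_vert hχ A
  have hτ1 : HypL1 (fun z : PGPt F m => φ (γ (A, z))) := hypL1_comp hγ.1 hγ.2.1 hφ A
  have hτ2 : HypL2 (fun z : PGPt F m => φ (γ (A, z))) := hypL2_comp hγ.1 hγ.2.1 hφ A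
  have hB : ⨆ i, (B i).submodule = ⊤ := hI.1.2
  have hdim : Module.finrank F (Fin (m + 1) → F) = m + 1 := Module.finrank_fin_fun F
  have hrankσ : Module.rank K
      ↥(spanOf (mapSet (fun z : PGPt F m => χ (A, z)) univ)) = (m : Cardinal) + 1 := by
    rw [← mapSet_vert χ A univ]
    exact hII
  have hSeq : spanOf (mapSet (fun z : PGPt F m => χ (A, z)) univ)
      = spanOf (mapSet (fun z : PGPt F m => φ (γ (A, z))) univ) := by
    rw [spanOf_mapSet_eq_iSup hσ1 B hB, spanOf_mapSet_eq_iSup hτ1 B hB]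
    congr 1
    funext i
    rw [ptImg_congr (σ := fun z : PGPt F m => χ (A, z))
      (τ := fun z : PGPt F m => φ (γ (A, z))) (X := B i) (hext A i).symm]
  have hrankτ : Module.rank K
      ↥(spanOf (mapSet (fun z : PGPt F m => φ (γ (A, z))) univ)) = (m : Cardinal) + 1 := by
    rw [← hSeq]; exact hrankσ
  have hσglob : ∀ z, (fun z : PGPt F m => χ (A, z)) z ≠ none :=
    global_of_rank hdim hσ1 hrankσ
  have hτglob : ∀ z, (fun z : PGPt F m => φ (γ (A, z))) z ≠ none :=
    global_of_rank hdim hτ1 hrankτ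
  have hσinj : ∀ {X Y : PGPt F m} {q : Projectivization K W},
      χ (A, X) = some q → χ (A, Y) = some q → X = Y :=
    fun hX hY => inj_of_global hσ2 hσglob hX hY
  have hτinj : ∀ {X Y : PGPt F m} {q : Projectivization K W},
      φ (γ (A, X)) = some q → φ (γ (A, Y)) = some q → X = Y :=
    fun hX hY => inj_of_global hτ2 hτglob hX hY
  have hImEq : mapSet (fun z : PGPt F m => χ (A, z)) univ
      = mapSet (fun z : PGPt F m => φ (γ (A, z))) univ := by
    apply subset_antisymm <;> intro q hq
    · exact surj_of_global hτ1 hτglob (by rw [← hSeq]; exact submodule_le_spanOf hq)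
    · exact surj_of_global hσ1 hσglob (by rw [hSeq]; exact submodule_le_spanOf hq)
  refine ⟨?_, ?_, ?_⟩
  · -- part 1
    rw [mapSet_vert (fun q => φ (γ q)) A univ, mapSet_vert χ A univ]
    exact hImEq.symm
  · -- part 2
    intro X
    obtain ⟨q, hq⟩ := Option.ne_none_iff_exists'.1 (hτglob X)
    have hqmem : q ∈ mapSet (fun z : PGPt F m => χ (A, z)) univ := by
      rw [hImEq]; exact mem_mapSet_iff.2 ⟨X, trivial, hq⟩
    obtain ⟨Y, -, hY⟩ := mem_mapSet_iff.1 hqmem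
    refine ⟨Y, ?_, ?_⟩
    · show ptImg χ (A, Y) = ptImg φ (γ (A, X))
      rw [ptImg_some (show χ (A, Y) = some q from hY),
        ptImg_some (show φ (γ (A, X)) = some q from hq)]
    · intro Y' hY'
      have hY'' : ptImg χ (A, Y') = ptImg φ (γ (A, X)) := hY'
      have h1 : q ∈ ptImg χ (A, Y') := by
        rw [hY'', ptImg_some (show φ (γ (A, X)) = some q from hq)]
        rfl
      have h2 : χ (A, Y') = some q := h1
      exact hσinj h2 hY
  · -- part 3
    intro α' hα'
    have hpt : ∀ z : PGPt F m, χ (A, α' z) = φ (γ (A, z)) := by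
      intro z
      obtain ⟨q, hq⟩ := Option.ne_none_iff_exists'.1 (hτglob z)
      have h1 : q ∈ ptImg χ (A, α' z) := by
        rw [hα' z, ptImg_some (show φ (γ (A, z)) = some q from hq)]
        rfl
      have h2 : χ (A, α' z) = some q := h1
      rw [h2]
      exact hq.symm
    have hbij : Function.Bijective α' := by
      constructor
      · intro X Y hXY
        obtain ⟨p, hp⟩ := Option.ne_none_iff_exists'.1 (hτglob X)
        obtain ⟨q, hq⟩ := Option.ne_none_iff_exists'.1 (hτglob Y)
        have h1 : χ (A, α' X) = some p := by rw [hpt X]; exact hp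
        have h2 : χ (A, α' Y) = some q := by rw [hpt Y]; exact hq
        rw [hXY] at h1
        have hpq : p = q := Option.some_inj.1 (h1.symm.trans h2)
        exact hτinj hp (hq.trans (congrArg some hpq.symm))
      · intro Y
        obtain ⟨q, hq⟩ := Option.ne_none_iff_exists'.1 (hσglob Y)
        have hqm : q ∈ mapSet (fun z : PGPt F m => φ (γ (A, z))) univ := by
          rw [← hImEq]; exact mem_mapSet_iff.2 ⟨Y, trivial, hq⟩
        obtain ⟨X, -, hX⟩ := mem_mapSet_iff.1 hqm
        have h1 : χ (A, α' X) = some q := by rw [hpt X]; exact hX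
        exact ⟨X, hσinj h1 hq⟩
    refine ⟨hbij, fun g => ⟨fun hg => ?_, fun hg' => ?_⟩⟩
    · exact line_image hσ1 hσglob hσinj hτ1 hτglob hτinj α' hpt hg
    · obtain ⟨β, hβ1, hβ2⟩ := Function.bijective_iff_has_inverse.1 hbij
      have hβpt : ∀ z : PGPt F m, φ (γ (A, β z)) = χ (A, z) := by
        intro z
        have h := hpt (β z)
        rw [hβ2 z] at h
        exact h.symm
      have himg := line_image hτ1 hτglob hτinj hσ1 hσglob hσinj β hβpt hg'
      have hgg : β '' (α' '' g) = g := by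
        rw [← Set.image_comp, Function.LeftInverse.comp_eq_id hβ1, Set.image_id]
      rwa [hgg] at himg
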